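/- arXiv:1212.5726 — 2 statements merged into one kernel-verified Lean document; each statement's English description precedes it below -/
import Mathlib

section
/- For a topological space X, the following are equivalent: (1) for every pair of pointwise discontinuous functions f : X → ℝ and g : X → ℝ, the set C(f) ∩ C(g) is non-empty; (2) for every pair G, H of dense Gδ subsets of X, the set G ∩ H is non-empty. -/
open Set

/-- For a dense Gδ set `G`, there is a real-valued function whose continuity set is exactly `G`. -/
lemma exists_fun_continuousAt_eq {X : Type*} [TopologicalSpace X] {G : Set X}
    (hG : IsGδ G) (hd : Dense G) : ∃ f : X → ℝ, {x | ContinuousAt f x} = G := by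
  obtain ⟨U, hUopen, hUG⟩ := isGδ_iff_eq_iInter_nat.mp hG
  set V : ℕ → Set X := fun n => ⋂ k ∈ Finset.range (n + 1), U k with hV
  have hVopen : ∀ n, IsOpen (V n) := fun n =>
    isOpen_biInter_finset fun k _ => hUopen k
  have hVanti : ∀ {m n : ℕ}, m ≤ n → V n ⊆ V m := by
    intro m n hmn x hx
    simp only [hV, mem_iInter, Finset.mem_range] at hx ⊢
    intro k hk
    exact hx k (lt_of_lt_of_le hk (by omega))
  have hGV : ∀ x, x ∈ G ↔ ∀ n, x ∈ V n := by
    intro x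
    constructor
    · intro hx n
      simp only [hV, mem_iInter]
      intro k _
      exact (hUG ▸ hx : x ∈ ⋂ n, U n) |> mem_iInter.mp |> (· k)
    · intro hx
      rw [hUG, mem_iInter]
      intro n
      have := hx n
      simp only [hV, mem_iInter, Finset.mem_range] at this
      exact this n (by omega)
  classical
  have hex : ∀ x, x ∉ G → ∃ n, x ∉ V n := by
    intro x hx
    by_contra h
    push_neg at h
    exact hx ((hGV x).mpr h)
  set f : X → ℝ := fun x =>
    if h : x ∈ G then 0 else ((Nat.find (hex x h) : ℝ) + 1)⁻¹ with hf
  have hf0 : ∀ x ∈ G, f x = 0 := fun x hx => by simp [hf, hx]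
  have hfnonneg : ∀ x, 0 ≤ f x := by
    intro x
    by_cases hx : x ∈ G
    · simp [hf, hx]
    · simp only [hf, hx, dif_neg, not_false_iff]
      positivity
  have hfsmall : ∀ n, ∀ y ∈ V n, f y ≤ ((n : ℝ) + 2)⁻¹ := by
    intro n y hy
    by_cases hyG : y ∈ G
    · rw [hf0 y hyG]; positivity
    · have hfind : n + 1 ≤ Nat.find (hex y hyG) := by
        rw [Nat.add_one_le_iff, Nat.lt_find_iff]
        intro m hm
        simp only [not_not]
        exact hVanti hm hy
      simp only [hf, hyG, dif_neg, not_false_iff]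
      rw [inv_le_inv₀ (by positivity) (by positivity)]
      have : (n : ℝ) + 1 ≤ (Nat.find (hex y hyG) : ℝ) := by exact_mod_cast hfind
      linarith
  refine ⟨f, Set.ext fun x => ?_⟩
  simp only [mem_setOf_eq]
  constructor
  · -- continuity at x implies x ∈ G
    intro hc
    by_contra hxG
    have hfx : 0 < f x := by
      simp only [hf, hxG, dif_neg, not_false_iff]
      positivity
    have : f ⁻¹' Set.Ioi (f x / 2) ∈ nhds x :=
      hc (Ioi_mem_nhds (by linarith))
    obtain ⟨O, hOsub, hOopen, hxO⟩ := mem_nhds_iff.mp this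
    obtain ⟨y, hyG, hyO⟩ := hd.exists_mem_open hOopen ⟨x, hxO⟩
    have := hOsub hyO
    rw [mem_preimage, mem_Ioi, hf0 y hyG] at this
    linarith
  · -- x ∈ G implies continuity at x
    intro hxG
    have hfx0 : f x = 0 := hf0 x hxG
    rw [ContinuousAt, hfx0]
    rw [Metric.tendsto_nhds]
    intro ε hε
    obtain ⟨n, hn⟩ := exists_nat_one_div_lt hε
    filter_upwards [(hVopen n).mem_nhds ((hGV x).mp hxG n)] with y hy
    have h1 := hfsmall n y hy
    have h2 := hfnonneg y
    rw [Real.dist_eq, sub_zero, abs_of_nonneg h2]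
    have : ((n : ℝ) + 2)⁻¹ ≤ ((n : ℝ) + 1)⁻¹ := by
      apply inv_le_inv₀ (by positivity) (by positivity) |>.mpr
      linarith
    have hn' : ((n : ℝ) + 1)⁻¹ < ε := by
      rw [one_div] at hn
      exact hn
    linarith


/-- Gauld–Piotrowski characterization of weakly Volterra spaces: for a topological space `X`,
the pointwise-discontinuous-functions condition is equivalent to the dense-Gδ condition. -/
theorem weaklyVolterra_characterization {X : Type*} [TopologicalSpace X] :
    (∀ f g : X → ℝ, Dense {x | ContinuousAt f x} → Dense {x | ContinuousAt g x} →
        ({x | ContinuousAt f x} ∩ {x | ContinuousAt g x}).Nonempty) ↔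
    (∀ G H : Set X, IsGδ G → Dense G → IsGδ H → Dense H → (G ∩ H).Nonempty) := by
  constructor
  · intro h G H hG hGd hH hHd
    obtain ⟨f, hf⟩ := exists_fun_continuousAt_eq hG hGd
    obtain ⟨g, hg⟩ := exists_fun_continuousAt_eq hH hHd
    have := h f g (hf ▸ hGd) (hg ▸ hHd)
    rwa [hf, hg] at this
  · intro h f g hf hg
    exact h _ _ (IsGδ.setOf_continuousAt f) hf (IsGδ.setOf_continuousAt g) hg
end

section
/- Let X = {f ∈ 2^{ω₁} : |f⁻¹(1)| ≤ ℵ₀} be the set of all functions from ω₁ to {0,1} with countable support. For every partial function σ from a countable subset of ω₁ to {0,1}, let [σ] = {f ∈ X : σ ⊆ f}, and for every n < ω let Xₙ = {f ∈ X : |f⁻¹(1)| = n}. Equip X with the topology generated by the subbase {[σ] \ Xₙ : σ a countable partial function, n < ω}. Then X is a Baire space: every countable intersection of dense open subsets of X is dense. -/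
open Set TopologicalSpace

/-- The underlying set: functions from `I` to `Bool` with countable support. -/
def SpadaroX (I : Type*) : Type _ := {f : I → Bool // {i | f i = true}.Countable}

/-- `[σ]`: the set of members of `X` extending the partial function `σ`
(a partial function is coded as a map `I → Option Bool`). -/
def cylX {I : Type*} (σ : I → Option Bool) : Set (SpadaroX I) :=
  {f | ∀ i b, σ i = some b → f.1 i = b}

/-- `Xₙ`: the set of members of `X` whose support has exactly `n` elements. -/
def XnX {I : Type*} (n : ℕ) : Set (SpadaroX I) :=
  {f | {i | f.1 i = true}.encard = (n : ℕ∞)}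

/-- The subbase `{[σ] \ Xₙ : σ a countable partial function, n < ω}`. -/
def spadaroSubbase (I : Type*) : Set (Set (SpadaroX I)) :=
  {s | ∃ (σ : I → Option Bool) (n : ℕ),
    {i | σ i ≠ none}.Countable ∧ s = cylX σ \ XnX n}

instance spadaroTop (I : Type*) : TopologicalSpace (SpadaroX I) :=
  generateFrom (spadaroSubbase I)

/-- Merge of two partial functions, preferring the first. -/
def pmerge {I : Type*} (σ τ : I → Option Bool) : I → Option Bool :=
  fun i => match σ i with
  | some b => some b
  | none => τ i

lemma pmerge_support {I : Type*} (σ τ : I → Option Bool) :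
    {i | pmerge σ τ i ≠ none} ⊆ {i | σ i ≠ none} ∪ {i | τ i ≠ none} := by
  intro i hi
  by_cases h : σ i = none
  · right
    simpa [pmerge, h] using hi
  · exact Or.inl h

lemma pmerge_left {I : Type*} {σ τ : I → Option Bool} {i : I} {b : Bool}
    (h : σ i = some b) : pmerge σ τ i = some b := by
  simp [pmerge, h]

lemma mem_cylX_pmerge {I : Type*} {σ τ : I → Option Bool} {g : SpadaroX I}
    (hg1 : g ∈ cylX σ) (hg2 : g ∈ cylX τ) : g ∈ cylX (pmerge σ τ) := by
  intro i b h
  rcases hσ : σ i with _ | b'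
  · exact hg2 i b (by simpa [pmerge, hσ] using h)
  · have : b' = b := by simpa [pmerge, hσ] using h
    exact this ▸ hg1 i b' hσ

lemma cylX_pmerge_subset_left {I : Type*} (σ τ : I → Option Bool) :
    cylX (pmerge σ τ) ⊆ cylX σ := by
  intro f hf i b h
  exact hf i b (pmerge_left h)

lemma cylX_pmerge_subset_right {I : Type*} {σ τ : I → Option Bool} {g : SpadaroX I}
    (hg1 : g ∈ cylX σ) (hg2 : g ∈ cylX τ) :
    cylX (pmerge σ τ) ⊆ cylX τ := by
  intro f hf i b h
  rcases hσ : σ i with _ | b'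
  · exact hf i b (by simp [pmerge, hσ, h])
  · have hb : b' = b := by
      have h1 := hg1 i b' hσ
      have h2 := hg2 i b h
      rw [h1] at h2; exact h2
    exact hf i b (by simp [pmerge, hσ, hb])

/-- Key lemma: membership in an open set is witnessed by a countable partial function,
in a way robust for all extensions with infinite support. -/
lemma spadaro_key {I : Type*} {U : Set (SpadaroX I)}
    (hU : TopologicalSpace.GenerateOpen (spadaroSubbase I) U) :
    ∀ g ∈ U, ∃ τ : I → Option Bool, {i | τ i ≠ none}.Countable ∧ g ∈ cylX τ ∧
      ∀ f : SpadaroX I, f ∈ cylX τ → {i | f.1 i = true}.Infinite → f ∈ U := by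
  induction hU with
  | basic s hs =>
    obtain ⟨σ, n, hσc, rfl⟩ := hs
    intro g hg
    refine ⟨σ, hσc, hg.1, fun f hf hinf => ⟨hf, ?_⟩⟩
    simp only [XnX, mem_setOf_eq, hinf.encard_eq]
    simp
  | univ =>
    intro g _
    exact ⟨fun _ => none, by simp, fun i b h => by simp at h, fun f _ _ => trivial⟩
  | inter U V hU hV ihU ihV =>
    intro g hg
    obtain ⟨τ₁, hc1, hg1, h1⟩ := ihU g hg.1
    obtain ⟨τ₂, hc2, hg2, h2⟩ := ihV g hg.2
    refine ⟨pmerge τ₁ τ₂, (hc1.union hc2).mono (pmerge_support τ₁ τ₂),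
      mem_cylX_pmerge hg1 hg2, fun f hf hinf => ?_⟩
    exact ⟨h1 f (cylX_pmerge_subset_left τ₁ τ₂ hf) hinf,
      h2 f (cylX_pmerge_subset_right hg1 hg2 hf) hinf⟩
  | sUnion S hS ih =>
    intro g hg
    obtain ⟨U, hUS, hgU⟩ := hg
    obtain ⟨τ, hc, hgτ, h⟩ := ih U hUS g hgU
    exact ⟨τ, hc, hgτ, fun f hf hinf => ⟨U, hUS, h f hf hinf⟩⟩

/-- The countable partial functions with the extension witness property. -/
lemma spadaro_step {I : Type*} (hI : ¬ (univ : Set I).Countable)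
    {s : Set (SpadaroX I)} (hso : IsOpen s) (hsd : Dense s)
    (σ : {σ : I → Option Bool // {i | σ i ≠ none}.Countable}) :
    ∃ σ' : {σ : I → Option Bool // {i | σ i ≠ none}.Countable},
      (∀ i b, σ.1 i = some b → σ'.1 i = some b) ∧
      ∀ f : SpadaroX I, f ∈ cylX σ'.1 → {i | f.1 i = true}.Infinite → f ∈ s := by
  classical
  -- find a point of `cylX σ \ XnX 0`
  obtain ⟨i₀, hi₀⟩ : ∃ i₀, σ.1 i₀ = none := by
    by_contra h
    push_neg at h
    exact hI (σ.2.mono (fun i _ => h i))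
  set g0 : I → Bool := fun i => match σ.1 i with
    | some b => b
    | none => decide (i = i₀) with hg0
  have hg0supp : {i | g0 i = true}.Countable := by
    apply (σ.2.union (countable_singleton i₀)).mono
    intro i hi
    rcases hσ : σ.1 i with _ | b
    · right
      have : decide (i = i₀) = true := by simpa [hg0, hσ] using hi
      simpa using this
    · exact Or.inl (by simp [hσ])
  have hg0mem : (⟨g0, hg0supp⟩ : SpadaroX I) ∈ cylX σ.1 \ XnX 0 := by
    constructor
    · intro i b h
      simp [hg0, h]
    · simp only [XnX, mem_setOf_eq, Nat.cast_zero, encard_eq_zero]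
      intro h
      have : i₀ ∈ {i | g0 i = true} := by simp [hg0, hi₀]
      rw [h] at this
      exact this
  have hopen : IsOpen (cylX σ.1 \ XnX 0) :=
    TopologicalSpace.GenerateOpen.basic _ ⟨σ.1, 0, σ.2, rfl⟩
  obtain ⟨g, hgmem, hgs⟩ := hsd.inter_open_nonempty _ hopen ⟨_, hg0mem⟩
  obtain ⟨τ, hτc, hgτ, hτ⟩ := spadaro_key (show _ from hso) g hgs
  refine ⟨⟨pmerge σ.1 τ, (σ.2.union hτc).mono (pmerge_support σ.1 τ)⟩,
    fun i b h => pmerge_left h, fun f hf hinf => ?_⟩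
  exact hτ f (cylX_pmerge_subset_right hgmem.1 hgτ hf) hinf

/-- The space `X` is Baire: every countable intersection of dense open sets is dense. -/
theorem spadaro_baire (I : Type*) (hI : Cardinal.mk I = Cardinal.aleph 1) :
    ∀ s : ℕ → Set (SpadaroX I), (∀ n, IsOpen (s n)) → (∀ n, Dense (s n)) →
      Dense (⋂ n, s n) := by
  classical
  intro s hso hsd
  have hIunc : ¬ (univ : Set I).Countable := by
    rw [Set.countable_univ_iff]
    intro h
    have h1 : Cardinal.mk I ≤ Cardinal.aleph0 := Cardinal.mk_le_aleph0_iff.mpr h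
    rw [hI] at h1
    exact absurd h1 (not_le.mpr Cardinal.aleph0_lt_aleph_one)
  rw [dense_iff_inter_open]
  intro U hUo hUne
  obtain ⟨g, hg⟩ := hUne
  obtain ⟨τ₀, hτ₀c, _, hτ₀⟩ := spadaro_key (show _ from hUo) g hg
  choose next hnext1 hnext2 using fun k σ => spadaro_step hIunc (hso k) (hsd k) σ
  let seq : ℕ → {σ : I → Option Bool // {i | σ i ≠ none}.Countable} :=
    fun k => Nat.rec ⟨τ₀, hτ₀c⟩ (fun k σ => next k σ) k
  have hmono : ∀ k i b, (seq k).1 i = some b → (seq (k+1)).1 i = some b :=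
    fun k => hnext1 k (seq k)
  have hmono' : ∀ k m, k ≤ m → ∀ i b, (seq k).1 i = some b → (seq m).1 i = some b := by
    intro k m hkm
    induction m, hkm using Nat.le_induction with
    | base => exact fun i b h => h
    | succ m hm ih => exact fun i b h => hmono m i b (ih i b h)
  set D : Set I := ⋃ k, {i | (seq k).1 i ≠ none} with hD
  have hDc : D.Countable := countable_iUnion (fun k => (seq k).2)
  have hDcomp : Dᶜ.Infinite := by
    by_contra h
    rw [Set.not_infinite] at h
    apply hIunc
    have : (univ : Set I) ⊆ D ∪ Dᶜ := by
      intro i _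
      by_cases hi : i ∈ D
      · exact Or.inl hi
      · exact Or.inr hi
    exact (hDc.union h.countable).mono this
  let e := hDcomp.natEmbedding
  set F : I → Bool :=
    fun i => decide ((∃ k, (seq k).1 i = some true) ∨ ∃ n, (e n).1 = i) with hF
  have hFc : {i | F i = true}.Countable := by
    apply (hDc.union (countable_range (fun n => (e n).1))).mono
    intro i hi
    have hi' : (∃ k, (seq k).1 i = some true) ∨ ∃ n, (e n).1 = i := by
      simpa [hF] using hi
    rcases hi' with ⟨k, hk⟩ | ⟨n, hn⟩
    · exact Or.inl (mem_iUnion.mpr ⟨k, by simp [hk]⟩)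
    · exact Or.inr ⟨n, hn⟩
  set f : SpadaroX I := ⟨F, hFc⟩ with hf
  have hinf : {i | f.1 i = true}.Infinite := by
    apply Set.infinite_of_injective_forall_mem (f := fun n => (e n).1)
    · intro n m hnm
      exact e.injective (Subtype.ext hnm)
    · intro n
      show F (e n).1 = true
      simp [hF]
  have hcyl : ∀ k, f ∈ cylX (seq k).1 := by
    intro k i b h
    cases b with
    | true =>
      show F i = true
      simp only [hF, decide_eq_true_eq]
      exact Or.inl ⟨k, h⟩
    | false =>
      show F i = false
      simp only [hF, decide_eq_false_iff_not]
      rintro (⟨j, hj⟩ | ⟨n, hn⟩)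
      · rcases le_total j k with hjk | hkj
        · have := hmono' j k hjk i true hj
          rw [h] at this
          simp at this
        · have := hmono' k j hkj i false h
          rw [hj] at this
          simp at this
      · have hiD : i ∈ D := mem_iUnion.mpr ⟨k, by simp [h]⟩
        have := (e n).2
        rw [hn] at this
        exact this hiD
  refine ⟨f, hτ₀ f (hcyl 0) hinf, mem_iInter.mpr fun k => ?_⟩
  exact hnext2 k (seq k) f (hcyl (k+1)) hinf
end
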